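/- Let n ≥ 2 and ℓ ∈ [n]. For every T ∈ Arb(ℓ,n) and every directed edge e between distinct vertices of [n] with e ∉ E(T), every row sum and every column sum of the n×n integer matrix W^{T,e} equals 0. -/

import Mathlib

open Finset

/-- The weight matrix of a directed edge `(a, b)`: `(a,b)`-entry `1`, `(b,b)`-entry `-1`. -/
def wEdge (n : ℕ) (a b : Fin n) : Matrix (Fin n) (Fin n) ℤ :=
  Matrix.single a b 1 - Matrix.single b b 1

/-- The set of `ℓ`-arborescences on `[n]`, encoded by their parent functions. -/
def arbs (n : ℕ) (ℓ : Fin n) : Finset (Fin n → Fin n) :=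
  Finset.univ.filter fun p => p ℓ = ℓ ∧ ∀ v, p^[n] v = ℓ

/-- The edge set of the arborescence with parent function `p`. -/
def arbEdges (n : ℕ) (ℓ : Fin n) (p : Fin n → Fin n) : Finset (Fin n × Fin n) :=
  Finset.univ.filter fun e => e.2 ≠ ℓ ∧ p e.2 = e.1

/-- Directed edges between distinct vertices that are not edges of the arborescence. -/
def offEdges (n : ℕ) (ℓ : Fin n) (p : Fin n → Fin n) : Finset (Fin n × Fin n) :=
  Finset.univ.filter fun e => e.1 ≠ e.2 ∧ e ∉ arbEdges n ℓ p

/-- `w^T(v)`: the sum of the weights of the edges on the path from the root to `v`. -/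
def wPath (n : ℕ) (p : Fin n → Fin n) (v : Fin n) : Matrix (Fin n) (Fin n) ℤ :=
  ∑ k ∈ Finset.range n, wEdge n (p (p^[k] v)) (p^[k] v)

/-- `W^{T,e} = w^T(s) - w^T(t) + w(e)` for `e = (s,t)`. -/
def WTE (n : ℕ) (p : Fin n → Fin n) (e : Fin n × Fin n) : Matrix (Fin n) (Fin n) ℤ :=
  wPath n p e.1 - wPath n p e.2 + wEdge n e.1 e.2

lemma wEdge_rowSum (n : ℕ) (a b i : Fin n) :
    ∑ j, wEdge n a b i j = (if a = i then (1:ℤ) else 0) - (if b = i then 1 else 0) := by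
  simp only [wEdge, Matrix.single, Matrix.sub_apply, Matrix.of_apply,
    Finset.sum_sub_distrib]
  congr 1 <;> rcases eq_or_ne a i with h|h <;> rcases eq_or_ne b i with h2|h2 <;>
    simp [h, h2, Finset.sum_ite_eq]

lemma wEdge_colSum (n : ℕ) (a b j : Fin n) :
    ∑ i, wEdge n a b i j = 0 := by
  simp only [wEdge, Matrix.single, Matrix.sub_apply, Matrix.of_apply,
    Finset.sum_sub_distrib]
  rcases eq_or_ne b j with h|h <;> simp [h, Finset.sum_ite_eq']

lemma wPath_rowSum (n : ℕ) (p : Fin n → Fin n) (v i : Fin n) :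
    ∑ j, wPath n p v i j =
      (if p^[n] v = i then (1:ℤ) else 0) - (if v = i then 1 else 0) := by
  unfold wPath
  rw [show (∑ j, (∑ k ∈ Finset.range n, wEdge n (p (p^[k] v)) (p^[k] v)) i j)
      = ∑ k ∈ Finset.range n, ∑ j, wEdge n (p (p^[k] v)) (p^[k] v) i j by
    rw [Finset.sum_comm]
    simp [Matrix.sum_apply]]
  have : ∀ k, ∑ j, wEdge n (p (p^[k] v)) (p^[k] v) i j
      = (if p^[k+1] v = i then (1:ℤ) else 0) - (if p^[k] v = i then 1 else 0) := by
    intro k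
    rw [wEdge_rowSum, Function.iterate_succ_apply']
  simp only [this]
  rw [Finset.sum_range_sub (fun k => if p^[k] v = i then (1:ℤ) else 0)]
  simp
  congr 1

theorem stmt11 (n : ℕ) (hn : 2 ≤ n) (ℓ : Fin n) :
    ∀ p ∈ arbs n ℓ, ∀ e ∈ offEdges n ℓ p,
      (∀ i, ∑ j, WTE n p e i j = 0) ∧ ∀ j, ∑ i, WTE n p e i j = 0 := by
  intro p hp e _
  simp only [arbs, Finset.mem_filter] at hp
  obtain ⟨-, -, hiter⟩ := hp
  constructor
  · intro i
    simp only [WTE, Matrix.add_apply, Matrix.sub_apply, Finset.sum_add_distrib,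
      Finset.sum_sub_distrib, wPath_rowSum, wEdge_rowSum, hiter]
    ring
  · intro j
    simp only [WTE, Matrix.add_apply, Matrix.sub_apply, Finset.sum_add_distrib,
      Finset.sum_sub_distrib, wEdge_colSum]
    have : ∀ v, ∑ i, wPath n p v i j = 0 := by
      intro v
      unfold wPath
      rw [show (∑ i, (∑ k ∈ Finset.range n, wEdge n (p (p^[k] v)) (p^[k] v)) i j)
          = ∑ k ∈ Finset.range n, ∑ i, wEdge n (p (p^[k] v)) (p^[k] v) i j by
        rw [Finset.sum_comm]
        simp [Matrix.sum_apply]]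
      simp [wEdge_colSum]
    simp [this]
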